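/- For every fixed nonnegative integer k, the limit as n → ∞ of S(n, k) equals ∏_{i=1}^{k} (1 - 2^{-i})^{-1}, where S(ω,l) = Σ_{0 ≤ i₁ ≤ ⋯ ≤ i_l ≤ ω} 2^{-(i₁+⋯+i_l)}. -/

import Mathlib

/-- `S ω l` = sum over all nondecreasing tuples `0 ≤ i₁ ≤ ⋯ ≤ i_l ≤ ω`
of `2^{-(i₁+⋯+i_l)}`, with `S ω 0 = 1`. -/
noncomputable def S (ω l : ℕ) : ℝ := by
  classical
  exact ∑ f ∈ Finset.univ.filter (fun f : Fin l → Fin (ω + 1) => Monotone f),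
    (1 / 2 : ℝ) ^ (∑ i, (f i : ℕ))

lemma S_zero (n : ℕ) : S n 0 = 1 := by
  classical
  have h : ∀ f : Fin 0 → Fin (n+1), Monotone f := fun f a => a.elim0
  rw [S, Finset.filter_true_of_mem (fun f _ => h f)]
  simp

lemma S_mono (k : ℕ) : Monotone (fun n => S n k) := by
  apply monotone_nat_of_le_succ
  intro n
  classical
  simp only [S]
  have hemb : Function.Injective (fun f : Fin k → Fin (n+1) => (Fin.castSucc ∘ f : Fin k → Fin (n+2))) := by
    intro a b h
    funext x
    exact Fin.castSucc_injective _ (congrFun h x)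
  have h1 : (∑ f ∈ Finset.univ.filter (fun f : Fin k → Fin (n+1) => Monotone f),
      (1/2 : ℝ) ^ (∑ i, (f i : ℕ)))
      = ∑ f ∈ (Finset.univ.filter (fun f : Fin k → Fin (n+1) => Monotone f)).map ⟨_, hemb⟩,
      (1/2 : ℝ) ^ (∑ i, (f i : ℕ)) := by
    rw [Finset.sum_map]
    refine Finset.sum_congr rfl fun f _ => ?_
    simp [Fin.coe_castSucc]
  rw [h1]
  apply Finset.sum_le_sum_of_subset_of_nonneg
  · intro f hf
    simp only [Finset.mem_map, Finset.mem_filter, Finset.mem_univ, true_and,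
      Function.Embedding.coeFn_mk] at hf ⊢
    obtain ⟨g, hg, rfl⟩ := hf
    exact fun a b hab => Fin.castSucc_le_castSucc_iff.mpr (hg hab)
  · intro f _ _
    positivity

lemma S_bdd (k n : ℕ) : S n k ≤ 2 ^ k := by
  classical
  rw [S]
  have h1 : (∑ f ∈ Finset.univ.filter (fun f : Fin k → Fin (n+1) => Monotone f),
      (1/2 : ℝ) ^ (∑ i, (f i : ℕ)))
      ≤ ∑ f : Fin k → Fin (n+1), (1/2 : ℝ) ^ (∑ i, (f i : ℕ)) := by
    apply Finset.sum_le_sum_of_subset_of_nonneg (Finset.filter_subset _ _)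
    intro f _ _
    positivity
  refine h1.trans ?_
  have h2 : (∑ f : Fin k → Fin (n+1), (1/2 : ℝ) ^ (∑ i, (f i : ℕ)))
      = ∏ _i : Fin k, ∑ j : Fin (n+1), (1/2 : ℝ) ^ (j : ℕ) := by
    rw [Finset.prod_univ_sum]
    rw [Fintype.piFinset_univ]
    refine Finset.sum_congr rfl fun f _ => ?_
    rw [← Finset.prod_pow_eq_pow_sum]
  rw [h2]
  have h3 : (∑ j : Fin (n+1), (1/2 : ℝ) ^ (j : ℕ)) ≤ 2 := by
    rw [Fin.sum_univ_eq_sum_range]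
    rw [geom_sum_eq (by norm_num)]
    have : (0:ℝ) ≤ (1/2 : ℝ)^(n+1) := by positivity
    rw [div_le_iff_of_neg (by norm_num)]
    linarith
  calc ∏ _i : Fin k, ∑ j : Fin (n+1), (1/2 : ℝ) ^ (j : ℕ)
      ≤ ∏ _i : Fin k, (2:ℝ) := by
        apply Finset.prod_le_prod
        · intro i _; positivity
        · intro i _; exact h3
    _ = 2 ^ k := by simp

lemma mono_cons {m k : ℕ} {g : Fin k → Fin (m+1)} (hg : Monotone g) :
    Monotone (Fin.cons 0 g : Fin (k+1) → Fin (m+1)) := by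
  intro a b hab
  rcases Fin.eq_zero_or_eq_succ a with rfl | ⟨i, rfl⟩
  · simp only [Fin.cons_zero]
    exact Fin.zero_le _
  · rcases Fin.eq_zero_or_eq_succ b with rfl | ⟨j, rfl⟩
    · exact absurd (Fin.le_zero_iff.mp hab) (Fin.succ_ne_zero i)
    · simp only [Fin.cons_succ]
      exact hg (by rwa [Fin.succ_le_succ_iff] at hab)

lemma S_rec (n k : ℕ) :
    S (n+1) (k+1) = S (n+1) k + (1/2 : ℝ)^(k+1) * S n (k+1) := by
  classical
  simp only [S]
  rw [← Finset.sum_filter_add_sum_filter_not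
    (Finset.univ.filter (fun f : Fin (k+1) → Fin (n+2) => Monotone f))
    (fun f => f 0 = 0)]
  congr 1
  · -- sum over f with f 0 = 0  equals  S (n+1) k
    refine Finset.sum_nbij' (fun f => f ∘ Fin.succ) (fun g => Fin.cons 0 g)
      ?_ ?_ ?_ ?_ ?_
    · intro f hf
      simp only [Finset.mem_filter, Finset.mem_univ, true_and] at hf ⊢
      exact hf.1.comp Fin.strictMono_succ.monotone
    · intro g hg
      simp only [Finset.mem_filter, Finset.mem_univ, true_and] at hg ⊢
      exact ⟨mono_cons hg, Fin.cons_zero _ _⟩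
    · intro f hf
      simp only [Finset.mem_filter, Finset.mem_univ, true_and] at hf
      funext x
      rcases Fin.eq_zero_or_eq_succ x with rfl | ⟨i, rfl⟩
      · simp [hf.2.symm]
      · simp [Fin.cons_succ]
    · intro g _
      funext x
      simp [Fin.cons_succ]
    · intro f hf
      simp only [Finset.mem_filter, Finset.mem_univ, true_and] at hf
      congr 1
      rw [Fin.sum_univ_succ, hf.2]
      simp
  · -- sum over f with f 0 ≠ 0  equals  (1/2)^(k+1) * S n (k+1)
    rw [Finset.mul_sum]
    refine Finset.sum_nbij'
      (fun f => fun x : Fin (k+1) => (⟨(f x : ℕ) - 1, by have := (f x).isLt; omega⟩ : Fin (n+1)))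
      (fun g => fun x : Fin (k+1) => (g x).succ) ?_ ?_ ?_ ?_ ?_
    · intro f hf
      simp only [Finset.mem_filter, Finset.mem_univ, true_and] at hf ⊢
      intro a b hab
      exact Fin.mk_le_mk.mpr (Nat.sub_le_sub_right (hf.1 hab) 1)
    · intro g hg
      simp only [Finset.mem_filter, Finset.mem_univ, true_and] at hg ⊢
      refine ⟨fun a b hab => Fin.succ_le_succ_iff.mpr (hg hab), Fin.succ_ne_zero _⟩
    · intro f hf
      simp only [Finset.mem_filter, Finset.mem_univ, true_and] at hf
      have hx : ∀ x, 1 ≤ (f x : ℕ) := by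
        intro x
        have h0 : f 0 ≤ f x := hf.1 (Fin.zero_le x)
        have : (0:ℕ) < (f 0 : ℕ) := by
          rcases Nat.eq_zero_or_pos (f 0 : ℕ) with h | h
          · exact absurd (Fin.ext h) hf.2
          · exact h
        have := Fin.le_def.mp h0
        omega
      funext x
      apply Fin.ext
      simp only [Fin.val_succ]
      have := hx x
      omega
    · intro g _
      funext x
      apply Fin.ext
      simp [Fin.val_succ]
    · intro f hf
      simp only [Finset.mem_filter, Finset.mem_univ, true_and] at hf
      have hx : ∀ x, 1 ≤ (f x : ℕ) := by
        intro x
        have h0 : f 0 ≤ f x := hf.1 (Fin.zero_le x)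
        have : (0:ℕ) < (f 0 : ℕ) := by
          rcases Nat.eq_zero_or_pos (f 0 : ℕ) with h | h
          · exact absurd (Fin.ext h) hf.2
          · exact h
        have := Fin.le_def.mp h0
        omega
      rw [← pow_add]
      congr 1
      have : ∀ x : Fin (k+1), (f x : ℕ) = ((f x : ℕ) - 1) + 1 :=
        fun x => (Nat.sub_add_cancel (hx x)).symm
      rw [Finset.sum_congr rfl (fun x _ => this x), Finset.sum_add_distrib]
      simp [Finset.card_univ, add_comm]

theorem stmt_2 (k : ℕ) :
    Filter.Tendsto (fun n : ℕ => S n k) Filter.atTop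
      (nhds (∏ i ∈ Finset.Icc 1 k, (1 - (1 / 2 : ℝ) ^ i)⁻¹)) := by
  induction k with
  | zero =>
    simp only [S_zero, Finset.Icc_self]
    simpa using tendsto_const_nhds
  | succ k ih =>
    set P : ℕ → ℝ := fun k => ∏ i ∈ Finset.Icc 1 k, (1 - (1 / 2 : ℝ) ^ i)⁻¹ with hP
    have hconv : Filter.Tendsto (fun n => S n (k+1)) Filter.atTop
        (nhds (⨆ n, S n (k+1))) :=
      tendsto_atTop_ciSup (S_mono (k+1)) ⟨2^(k+1), by rintro _ ⟨n, rfl⟩; exact S_bdd (k+1) n⟩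
    set L := ⨆ n, S n (k+1) with hL
    -- shifted limits
    have hshift : Filter.Tendsto (fun n => S (n+1) (k+1)) Filter.atTop (nhds L) :=
      hconv.comp (Filter.tendsto_add_atTop_nat 1)
    have hshift' : Filter.Tendsto (fun n => S (n+1) k) Filter.atTop (nhds (P k)) :=
      ih.comp (Filter.tendsto_add_atTop_nat 1)
    have hrhs : Filter.Tendsto (fun n => S (n+1) k + (1/2:ℝ)^(k+1) * S n (k+1))
        Filter.atTop (nhds (P k + (1/2:ℝ)^(k+1) * L)) :=
      hshift'.add (hconv.const_mul _)
    have heq : (fun n => S (n+1) (k+1)) = fun n => S (n+1) k + (1/2:ℝ)^(k+1) * S n (k+1) :=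
      funext fun n => S_rec n k
    have hLeq : L = P k + (1/2:ℝ)^(k+1) * L :=
      tendsto_nhds_unique hshift (heq ▸ hrhs)
    have hq : (1 - (1/2:ℝ)^(k+1)) ≠ 0 := by
      have : (1/2:ℝ)^(k+1) < 1 := by
        apply pow_lt_one₀ (by norm_num) (by norm_num) (by omega)
      linarith
    have hLval : L = P k * (1 - (1/2:ℝ)^(k+1))⁻¹ := by
      rw [eq_mul_inv_iff_mul_eq₀ hq]
      linear_combination hLeq
    have hPsucc : P (k+1) = P k * (1 - (1/2:ℝ)^(k+1))⁻¹ := by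
      rw [hP]
      exact Finset.prod_Icc_succ_top (by omega) _
    rw [← hPsucc] at hLval
    rw [show (∏ i ∈ Finset.Icc 1 (k+1), (1 - (1/2:ℝ)^i)⁻¹) = P (k+1) from rfl, ← hLval]
    exact hconv
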